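/- Let E be a nonzero Banach space. The set Mltp_u(E) of unital continuous multiplications on E is an open subset of Mltp(E), the set of all continuous multiplications on E, in the topology induced by the operator norm on bounded bilinear operators. -/

import Mathlib

/-- Let `E` be a nonzero Banach space.  The set of unital continuous
multiplications on `E` is open in the set `Mltp E` of all continuous multiplications on `E`
(with the topology induced by the operator norm on bounded bilinear operators). -/
theorem stmt_10
    {E : Type*} [NormedAddCommGroup E] [NormedSpace ℝ E] [CompleteSpace E] [Nontrivial E] :
    IsOpen {f : {g : E →L[ℝ] E →L[ℝ] E // ∀ x y z : E, g (g x y) z = g x (g y z)} |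
      ∃ e : E, ∀ x : E, f.1 e x = x ∧ f.1 x e = x} := by
  have key : ∀ f ∈ {f : {g : E →L[ℝ] E →L[ℝ] E // ∀ x y z : E, g (g x y) z = g x (g y z)} |
      ∃ e : E, ∀ x : E, f.1 e x = x ∧ f.1 x e = x}, ∃ ε > 0, Metric.ball f ε ⊆
      {f : {g : E →L[ℝ] E →L[ℝ] E // ∀ x y z : E, g (g x y) z = g x (g y z)} |
      ∃ e : E, ∀ x : E, f.1 e x = x ∧ f.1 x e = x} := ?_
  · exact Metric.isOpen_iff.mpr key
  rintro f ⟨e, he⟩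
  refine ⟨1 / (2 * (‖e‖ + 1)), by positivity, ?_⟩
  rintro f' hf'
  have hd : ‖f'.1 - f.1‖ < 1 / (2 * (‖e‖ + 1)) := by
    have h := Metric.mem_ball.mp hf'
    rw [Subtype.dist_eq] at h
    have h2 : dist (f'.1) (f.1) = ‖f'.1 - f.1‖ := by exact dist_eq_norm (f'.1) (f.1)
    rw [h2] at h
    exact h
  set L : E →L[ℝ] E := f'.1 e with hLdef
  set R : E →L[ℝ] E := f'.1.flip e with hRdef
  have hbound : ∀ x : E, ‖f'.1 - f.1‖ * ‖e‖ * ‖x‖ ≤ (1 / 2 : ℝ) * ‖x‖ := by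
    intro x
    have h1 : ‖f'.1 - f.1‖ * ‖e‖ ≤ (1 / (2 * (‖e‖ + 1))) * (‖e‖ + 1) := by
      apply mul_le_mul hd.le (by linarith [norm_nonneg e]) (norm_nonneg e)
      positivity
    have h2 : (1 / (2 * (‖e‖ + 1))) * (‖e‖ + 1) = 1 / 2 := by
      have : ‖e‖ + 1 ≠ 0 := by positivity
      field_simp
    rw [h2] at h1
    exact mul_le_mul_of_nonneg_right h1 (norm_nonneg x)
  have hL : ‖1 - L‖ < 1 := by
    have hle : ‖1 - L‖ ≤ 1 / 2 := by
      apply ContinuousLinearMap.opNorm_le_bound _ (by norm_num)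
      intro x
      have h3 : (1 - L) x = -(((f'.1 - f.1) e) x) := by
        simp [hLdef, (he x).1]
      rw [h3, norm_neg]
      calc ‖((f'.1 - f.1) e) x‖ ≤ ‖(f'.1 - f.1) e‖ * ‖x‖ :=
            ContinuousLinearMap.le_opNorm _ _
        _ ≤ ‖f'.1 - f.1‖ * ‖e‖ * ‖x‖ :=
            mul_le_mul_of_nonneg_right (ContinuousLinearMap.le_opNorm _ _) (norm_nonneg x)
        _ ≤ (1 / 2 : ℝ) * ‖x‖ := hbound x
    linarith
  have hR : ‖1 - R‖ < 1 := by
    have hle : ‖1 - R‖ ≤ 1 / 2 := by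
      apply ContinuousLinearMap.opNorm_le_bound _ (by norm_num)
      intro x
      have h3 : (1 - R) x = -((f'.1 - f.1) x e) := by
        simp [hRdef, (he x).2, ContinuousLinearMap.flip_apply]
      rw [h3, norm_neg]
      calc ‖(f'.1 - f.1) x e‖ ≤ ‖(f'.1 - f.1) x‖ * ‖e‖ :=
            ContinuousLinearMap.le_opNorm _ _
        _ ≤ ‖f'.1 - f.1‖ * ‖x‖ * ‖e‖ :=
            mul_le_mul_of_nonneg_right (ContinuousLinearMap.le_opNorm _ _) (norm_nonneg e)
        _ = ‖f'.1 - f.1‖ * ‖e‖ * ‖x‖ := by ring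
        _ ≤ (1 / 2 : ℝ) * ‖x‖ := hbound x
    linarith
  set uL : (E →L[ℝ] E)ˣ := Units.oneSub (1 - L) hL with huLdef
  set uR : (E →L[ℝ] E)ˣ := Units.oneSub (1 - R) hR with huRdef
  have huL : (uL : E →L[ℝ] E) = L := sub_sub_cancel 1 L
  have huR : (uR : E →L[ℝ] E) = R := sub_sub_cancel 1 R
  have hLinv : ∀ x : E, (↑uL⁻¹ : E →L[ℝ] E) (L x) = x := by
    intro x
    rw [← huL, ← ContinuousLinearMap.mul_apply, uL.inv_mul]
    rfl
  have hRinv : ∀ x : E, (↑uR⁻¹ : E →L[ℝ] E) (R x) = x := by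
    intro x
    rw [← huR, ← ContinuousLinearMap.mul_apply, uR.inv_mul]
    rfl
  have hLinj : Function.Injective L := fun a b h => by
    rw [← hLinv a, ← hLinv b, h]
  have hRinj : Function.Injective R := fun a b h => by
    rw [← hRinv a, ← hRinv b, h]
  set u : E := (↑uL⁻¹ : E →L[ℝ] E) e with hudef
  set v : E := (↑uR⁻¹ : E →L[ℝ] E) e with hvdef
  have hLu : f'.1 e u = e := by
    have h4 : L u = e := by
      rw [hudef, ← huL, ← ContinuousLinearMap.mul_apply, uL.mul_inv]
      rfl
    exact h4
  have hRv : f'.1 v e = e := by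
    have h4 : R v = e := by
      rw [hvdef, ← huR, ← ContinuousLinearMap.mul_apply, uR.mul_inv]
      rfl
    exact h4
  have hleft : ∀ x : E, f'.1 u x = x := by
    intro x
    apply hLinj
    show f'.1 e (f'.1 u x) = f'.1 e x
    rw [← f'.2 e u x, hLu]
  have hright : ∀ x : E, f'.1 x v = x := by
    intro x
    apply hRinj
    show f'.1 (f'.1 x v) e = f'.1 x e
    rw [f'.2 x v e, hRv]
  have huv : u = v := by
    have h1 : f'.1 u v = v := hleft v
    have h2 : f'.1 u v = u := hright u
    rw [← h1, h2]
  exact ⟨u, fun x => ⟨hleft x, by rw [huv]; exact hright x⟩⟩
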